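/- Let ρ be a normalized proximate order function with limit ρ₀ > 0, σ ≥ 0, and let f(z) = Σ_{ℓ≥0} a_ℓ z^ℓ be entire on ℂ satisfying: for every ε > 0 there exists D_ε with |f(z)| ≤ D_ε·exp((σ+ε)|z|^{ρ(|z|)}) for all z. Then for every ε > 0 the partial sums Σ_{ℓ≤N} a_ℓ z^ℓ converge to f in the norm ‖g‖_{ρ,σ+ε} = sup_z |g(z)|·exp(−(σ+ε)|z|^{ρ(|z|)}); equivalently Σ_{ℓ=0}^∞ ‖a_ℓ z^ℓ‖_{ρ,σ+ε} < ∞. -/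

import Mathlib

open Filter Real MeasureTheory intervalIntegral


private lemma cauchy_coeff_bound {f : ℂ → ℂ} {a : ℕ → ℂ}
    (hsum : ∀ z : ℂ, HasSum (fun ℓ : ℕ => a ℓ * z ^ ℓ) (f z))
    {r : ℝ} (hr : 0 < r) {B : ℝ}
    (hB : ∀ z : ℂ, ‖z‖ = r → ‖f z‖ ≤ B) (ℓ : ℕ) :
    ‖a ℓ‖ * r ^ ℓ ≤ B := by
  lift r to NNReal using hr.le with R hR
  set p := FormalMultilinearSeries.ofScalars ℂ a with hp
  have hps : p.sum = f := by
    funext z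
    rw [FormalMultilinearSeries.sum]
    simp only [hp, FormalMultilinearSeries.ofScalars_apply_eq, smul_eq_mul]
    exact (hsum z).tsum_eq
  have hrad : p.radius = ⊤ := by
    refine ENNReal.eq_top_of_forall_nnreal_le fun s => ?_
    have hsm : Summable fun n => a n * ((s : ℝ) : ℂ) ^ n := (hsum _).summable
    have htz : Tendsto (fun n => ‖a n‖ * (s : ℝ) ^ n) atTop (nhds 0) := by
      have h1 := hsm.tendsto_atTop_zero.norm
      simpa only [norm_mul, norm_pow, Complex.norm_real,
        Real.norm_eq_abs, abs_of_nonneg s.coe_nonneg, norm_zero] using h1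
    obtain ⟨C, hC⟩ := htz.bddAbove_range
    refine p.le_radius_of_bound C fun n => ?_
    rw [hp, FormalMultilinearSeries.ofScalars_norm]
    exact hC ⟨n, rfl⟩
  have hball : HasFPowerSeriesOnBall f p 0 p.radius := by
    rw [← hps]
    exact p.hasFPowerSeriesOnBall (by rw [hrad]; exact ENNReal.zero_lt_top)
  have hdf : Differentiable ℂ f := fun z =>
    (hball.differentiableOn z (by simp [hrad])).differentiableAt
      (EMetric.isOpen_ball.mem_nhds (by simp [hrad]))
  have hr' : 0 < R := by exact_mod_cast hr
  have hc : HasFPowerSeriesOnBall f (cauchyPowerSeries f 0 R) 0 R :=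
    hdf.differentiableOn.hasFPowerSeriesOnBall hr'
  have heq : p = cauchyPowerSeries f 0 R :=
    hball.hasFPowerSeriesAt.eq_formalMultilinearSeries hc.hasFPowerSeriesAt
  have hn : ‖a ℓ‖ = ‖cauchyPowerSeries f 0 R ℓ‖ := by
    rw [← heq, hp, FormalMultilinearSeries.ofScalars_norm]
  have hint : (∫ θ : ℝ in (0:ℝ)..2 * π, ‖f (circleMap 0 R θ)‖) ≤ 2 * π * B := by
    have := intervalIntegral.norm_integral_le_of_norm_le_const
      (C := B) (f := fun θ : ℝ => ‖f (circleMap 0 R θ)‖) (a := 0) (b := 2*π) ?_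
    · calc (∫ θ : ℝ in (0:ℝ)..2 * π, ‖f (circleMap 0 R θ)‖)
          ≤ ‖∫ θ : ℝ in (0:ℝ)..2 * π, ‖f (circleMap 0 R θ)‖‖ := le_abs_self _
        _ ≤ B * |2*π - 0| := this
        _ = 2 * π * B := by rw [sub_zero, abs_of_pos Real.two_pi_pos]; ring
    · intro x _
      rw [Real.norm_eq_abs, abs_of_nonneg (norm_nonneg _)]
      exact hB _ (by rw [norm_circleMap_zero]; exact abs_of_nonneg R.coe_nonneg)
  have hcs := norm_cauchyPowerSeries_le f 0 R ℓ
  have h2π : (0:ℝ) < 2 * π := Real.two_pi_pos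
  calc ‖a ℓ‖ * (R:ℝ) ^ ℓ = ‖cauchyPowerSeries f 0 R ℓ‖ * (R:ℝ) ^ ℓ := by rw [hn]
    _ ≤ (((2 * π)⁻¹ * ∫ θ : ℝ in (0:ℝ)..2 * π, ‖f (circleMap 0 R θ)‖) * |(R:ℝ)|⁻¹ ^ ℓ) * (R:ℝ) ^ ℓ := by
        gcongr
    _ = (2 * π)⁻¹ * (∫ θ : ℝ in (0:ℝ)..2 * π, ‖f (circleMap 0 R θ)‖) := by
        rw [abs_of_nonneg R.coe_nonneg, mul_assoc, inv_pow,
          inv_mul_cancel₀ (pow_ne_zero _ (ne_of_gt hr)), mul_one]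
    _ ≤ (2 * π)⁻¹ * (2 * π * B) := by
        gcongr
    _ = B := by field_simp


private lemma log_rho_diff_tendsto {ρ : ℝ → ℝ} {ρ₀ : ℝ}
    (hdiff : Differentiable ℝ ρ)
    (hlim : Tendsto ρ atTop (nhds ρ₀))
    (hder : Tendsto (fun r => deriv ρ r * r * Real.log r) atTop (nhds 0))
    {lam : ℝ} (hlam : 1 < lam) :
    Tendsto (fun t => Real.log (lam * t) * ρ (lam * t) - Real.log t * ρ t) atTop
      (nhds (ρ₀ * Real.log lam)) := by
  have hmul : Tendsto (fun t : ℝ => lam * t) atTop atTop :=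
    Tendsto.const_mul_atTop (by linarith) tendsto_id
  have h2 : Tendsto (fun t => ρ (lam * t) * Real.log lam) atTop (nhds (ρ₀ * Real.log lam)) :=
    (hlim.comp hmul).mul_const _
  have h1 : Tendsto (fun t => (ρ (lam * t) - ρ t) * Real.log t) atTop (nhds 0) := by
    rw [Metric.tendsto_atTop]
    intro δ hδ
    have hlam0 : 0 < lam - 1 := by linarith
    have hδ' : 0 < δ / (2 * (lam - 1)) := div_pos hδ (by linarith)
    obtain ⟨T, hT⟩ := Metric.tendsto_atTop.1 hder _ hδ'
    refine ⟨max T 1, fun t ht => ?_⟩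
    have ht1 : (1:ℝ) ≤ t := le_trans (le_max_right T 1) ht
    have htT : T ≤ t := le_trans (le_max_left T 1) ht
    have ht0 : (0:ℝ) < t := by linarith
    have hlt : t < lam * t := by nlinarith
    obtain ⟨ξ, hξ, hd⟩ := exists_hasDerivAt_eq_slope ρ (deriv ρ) hlt
      hdiff.continuous.continuousOn (fun x _ => (hdiff x).hasDerivAt)
    have hne : lam * t - t ≠ 0 := by nlinarith
    have hΔ : ρ (lam * t) - ρ t = deriv ρ ξ * (lam * t - t) := ((eq_div_iff hne).1 hd).symm
    have hξ1 : (1:ℝ) ≤ ξ := le_of_lt (lt_of_le_of_lt ht1 hξ.1)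
    have hξT : T ≤ ξ := le_of_lt (lt_of_le_of_lt htT hξ.1)
    have hs := hT ξ hξT
    rw [Real.dist_0_eq_abs] at hs ⊢
    have hlogt : 0 ≤ Real.log t := Real.log_nonneg ht1
    have hlogξ : 0 ≤ Real.log ξ := Real.log_nonneg hξ1
    have hlogmono : t * Real.log t ≤ ξ * Real.log ξ :=
      mul_le_mul hξ.1.le (Real.log_le_log ht0 hξ.1.le) hlogt (by linarith)
    have key : (ρ (lam * t) - ρ t) * Real.log t
        = deriv ρ ξ * (lam - 1) * (t * Real.log t) := by rw [hΔ]; ring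
    have e1 : |deriv ρ ξ * ξ * Real.log ξ| = |deriv ρ ξ| * (ξ * Real.log ξ) := by
      rw [abs_mul, abs_mul, abs_of_nonneg (by linarith : (0:ℝ) ≤ ξ), abs_of_nonneg hlogξ]
      ring
    have efin : (lam - 1) * (δ / (2 * (lam - 1))) = δ / 2 := by field_simp
    calc |(ρ (lam * t) - ρ t) * Real.log t|
        = |deriv ρ ξ| * (t * Real.log t) * (lam - 1) := by
          rw [key, abs_mul, abs_mul, abs_of_nonneg hlam0.le,
            abs_of_nonneg (mul_nonneg ht0.le hlogt)]
          ring
      _ ≤ |deriv ρ ξ| * (ξ * Real.log ξ) * (lam - 1) := by gcongr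
      _ = (lam - 1) * |deriv ρ ξ * ξ * Real.log ξ| := by rw [e1]; ring
      _ < (lam - 1) * (δ / (2 * (lam - 1))) := by
          exact mul_lt_mul_of_pos_left hs hlam0
      _ < δ := by rw [efin]; linarith
  have hcomb := h1.add h2
  rw [zero_add] at hcomb
  refine Tendsto.congr' ?_ hcomb
  filter_upwards [eventually_ge_atTop (1:ℝ)] with t ht
  rw [Real.log_mul (by linarith) (by linarith)]
  ring


/-- Proposition 3.14 (complex version): the Taylor series of f ∈ A_{ρ,σ+0}
converges to f in every norm ‖·‖_{ρ,σ+ε}; in particular Σ‖a_ℓ z^ℓ‖_{ρ,σ+ε} < ∞. -/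
theorem stmt_17 (ρ : ℝ → ℝ) (ρ₀ : ℝ) (hρ₀ : 0 < ρ₀)
    (hdiff : Differentiable ℝ ρ)
    (hpos : ∀ r, 0 ≤ r → 0 ≤ ρ r)
    (hlim : Filter.Tendsto ρ Filter.atTop (nhds ρ₀))
    (hder : Filter.Tendsto (fun r => deriv ρ r * r * Real.log r) Filter.atTop (nhds 0))
    (hmono : StrictMonoOn (fun r => r ^ ρ r) (Set.Ioi (0:ℝ)))
    (hzero : Filter.Tendsto (fun r => r ^ ρ r) (nhdsWithin 0 (Set.Ioi 0)) (nhds 0))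
    (σ : ℝ) (hσ : 0 ≤ σ)
    (f : ℂ → ℂ) (a : ℕ → ℂ)
    (hsum : ∀ z : ℂ, HasSum (fun ℓ : ℕ => a ℓ * z ^ ℓ) (f z))
    (hbound : ∀ ε > (0:ℝ), ∃ D > (0:ℝ), ∀ z : ℂ,
      ‖f z‖ ≤ D * Real.exp ((σ + ε) * ‖z‖ ^ ρ (‖z‖))) :
    ∀ ε > (0:ℝ),
      Summable (fun ℓ : ℕ => ⨆ z : ℂ,
        ‖a ℓ‖ * ‖z‖ ^ ℓ
          * Real.exp (-(σ + ε) * ‖z‖ ^ ρ (‖z‖))) ∧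
      Filter.Tendsto (fun N : ℕ => ⨆ z : ℂ,
          ‖f z - ∑ ℓ ∈ Finset.range N, a ℓ * z ^ ℓ‖
            * Real.exp (-(σ + ε) * ‖z‖ ^ ρ (‖z‖)))
        Filter.atTop (nhds 0) := by
  intro ε hε
  obtain ⟨D, hD, hDb⟩ := hbound (ε/4) (by linarith)
  have hσε4 : (0:ℝ) < σ + ε/4 := by linarith
  have hσε2 : (0:ℝ) < σ + ε/2 := by linarith
  set b : ℝ := (σ + ε/2)/(σ + ε/4) with hbdef
  have hb1 : 1 < b := (one_lt_div hσε4).2 (by linarith)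
  have hb0 : 0 < b := by linarith
  set lam : ℝ := b ^ (ρ₀⁻¹) with hlamdef
  have hlam1 : 1 < lam :=
    (Real.one_lt_rpow_iff_of_pos hb0).2 (Or.inl ⟨hb1, inv_pos.2 hρ₀⟩)
  have hlam0 : 0 < lam := by linarith
  have hloglam : ρ₀ * Real.log lam = Real.log b := by
    rw [hlamdef, Real.log_rpow hb0]
    field_simp
  have hG : Tendsto (fun t => Real.log (lam * t) * ρ (lam * t) - Real.log t * ρ t) atTop
      (nhds (ρ₀ * Real.log lam)) := log_rho_diff_tendsto hdiff hlim hder hlam1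
  have hK : ρ₀ * Real.log lam < Real.log (σ + ε*3/4) - Real.log (σ + ε/4) := by
    rw [hloglam, hbdef, Real.log_div (ne_of_gt hσε2) (ne_of_gt hσε4)]
    have h5 : Real.log (σ + ε/2) < Real.log (σ + ε*3/4) := Real.log_lt_log hσε2 (by linarith)
    linarith
  have hev : ∀ᶠ t in atTop, (σ + ε/4) * (lam*t) ^ ρ (lam*t) ≤ (σ + ε*3/4) * t ^ ρ t := by
    filter_upwards [hG.eventually_lt_const hK, eventually_ge_atTop (1:ℝ)] with t hGt ht1
    have ht0 : (0:ℝ) < t := by linarith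
    have hlt0 : (0:ℝ) < lam * t := by nlinarith
    rw [Real.rpow_def_of_pos hlt0, Real.rpow_def_of_pos ht0]
    calc (σ + ε/4) * Real.exp (Real.log (lam*t) * ρ (lam*t))
        = Real.exp (Real.log (σ + ε/4) + Real.log (lam*t) * ρ (lam*t)) := by
          rw [Real.exp_add, Real.exp_log hσε4]
      _ ≤ Real.exp (Real.log (σ + ε*3/4) + Real.log t * ρ t) := by
          apply Real.exp_le_exp.2; linarith
      _ = (σ + ε*3/4) * Real.exp (Real.log t * ρ t) := by
          rw [Real.exp_add, Real.exp_log (by linarith : (0:ℝ) < σ + ε*3/4)]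
  obtain ⟨T₀, hT₀⟩ := eventually_atTop.1 hev
  set T : ℝ := max T₀ 1 with hTdef
  have hT1 : (1:ℝ) ≤ T := le_max_right _ _
  have hT0 : (0:ℝ) < T := by linarith
  have hCau : ∀ r : ℝ, 0 < r → ∀ ℓ : ℕ,
      ‖a ℓ‖ * r ^ ℓ ≤ D * Real.exp ((σ + ε/4) * r ^ ρ r) := by
    intro r hr ℓ
    refine cauchy_coeff_bound hsum hr (fun z hz => ?_) ℓ
    have h10 := hDb z
    rw [hz] at h10
    exact h10
  set C : ℝ := D * Real.exp ((σ + ε/4) * (lam*T) ^ ρ (lam*T)) with hCdef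
  have hexp1 : (1:ℝ) ≤ Real.exp ((σ + ε/4) * (lam*T) ^ ρ (lam*T)) :=
    Real.one_le_exp (mul_nonneg hσε4.le (Real.rpow_nonneg (by positivity) _))
  have hC0 : 0 < C := by positivity
  have hS : ∀ (ℓ : ℕ) (z : ℂ), ‖a ℓ‖ * ‖z‖ ^ ℓ
      * Real.exp (-(σ + ε) * ‖z‖ ^ ρ (‖z‖)) ≤ C * (lam⁻¹)^ℓ := by
    intro ℓ z
    set t := ‖z‖ with htdef
    have ht0 : 0 ≤ t := norm_nonneg z
    have hVt : 0 ≤ t ^ ρ t := Real.rpow_nonneg ht0 _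
    have hexple : Real.exp (-(σ + ε) * t ^ ρ t) ≤ 1 := by
      rw [Real.exp_le_one_iff]
      nlinarith
    have habs : ‖a ℓ‖ = ‖a ℓ‖ := rfl
    have hshrink : ∀ s : ℝ, 0 < s → ‖a ℓ‖ * s ^ ℓ = (‖a ℓ‖ * (lam*s)^ℓ) * (lam⁻¹)^ℓ := by
      intro s hs
      have h6 : lam * s * lam⁻¹ = s := by field_simp
      rw [mul_assoc, ← mul_pow, h6]
    rcases le_or_gt t T with hcase | hcase
    · have h2 : ‖a ℓ‖ * T ^ ℓ ≤ C * (lam⁻¹)^ℓ := by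
        rw [hshrink T hT0]
        exact mul_le_mul_of_nonneg_right (hCau (lam*T) (by positivity) ℓ) (by positivity)
      calc ‖a ℓ‖ * t ^ ℓ * Real.exp (-(σ + ε) * t ^ ρ t)
          ≤ ‖a ℓ‖ * t ^ ℓ * 1 := by
            apply mul_le_mul_of_nonneg_left hexple (by positivity)
        _ = ‖a ℓ‖ * t ^ ℓ := by rw [habs, mul_one]
        _ ≤ ‖a ℓ‖ * T ^ ℓ := by gcongr
        _ ≤ C * (lam⁻¹)^ℓ := h2
    · have ht0' : 0 < t := lt_trans hT0 hcase
      have hkey := hT₀ t (le_of_lt (lt_of_le_of_lt (le_max_left T₀ 1) hcase))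
      have h3 := hCau (lam*t) (by positivity) ℓ
      have hexp2 : Real.exp ((σ + ε/4) * (lam*t) ^ ρ (lam*t)) * Real.exp (-(σ + ε) * t ^ ρ t) ≤ 1 := by
        rw [← Real.exp_add, Real.exp_le_one_iff]
        nlinarith
      calc ‖a ℓ‖ * t ^ ℓ * Real.exp (-(σ + ε) * t ^ ρ t)
          = ((‖a ℓ‖ * (lam*t)^ℓ) * (lam⁻¹)^ℓ) * Real.exp (-(σ + ε) * t ^ ρ t) := by
            rw [habs, hshrink t ht0']
        _ ≤ ((D * Real.exp ((σ + ε/4) * (lam*t) ^ ρ (lam*t))) * (lam⁻¹)^ℓ)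
              * Real.exp (-(σ + ε) * t ^ ρ t) := by
            apply mul_le_mul_of_nonneg_right _ (Real.exp_nonneg _)
            exact mul_le_mul_of_nonneg_right h3 (by positivity)
        _ = (D * (lam⁻¹)^ℓ) * (Real.exp ((σ + ε/4) * (lam*t) ^ ρ (lam*t))
              * Real.exp (-(σ + ε) * t ^ ρ t)) := by ring
        _ ≤ (D * (lam⁻¹)^ℓ) * 1 := by
            apply mul_le_mul_of_nonneg_left hexp2 (by positivity)
        _ ≤ C * (lam⁻¹)^ℓ := by
            rw [mul_one, hCdef]
            exact mul_le_mul_of_nonneg_right (le_mul_of_one_le_right hD.le hexp1) (by positivity)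
  have hr0 : (0:ℝ) ≤ lam⁻¹ := inv_nonneg.2 hlam0.le
  have hr1 : lam⁻¹ < 1 := inv_lt_one_of_one_lt₀ hlam1
  have hgeo : Summable (fun ℓ : ℕ => C * (lam⁻¹)^ℓ) :=
    (summable_geometric_of_lt_one hr0 hr1).mul_left C
  have hnn : ∀ (ℓ : ℕ) (z : ℂ), 0 ≤ ‖a ℓ‖ * ‖z‖ ^ ℓ
      * Real.exp (-(σ + ε) * ‖z‖ ^ ρ (‖z‖)) := fun ℓ z =>
    mul_nonneg (mul_nonneg (norm_nonneg _) (pow_nonneg (norm_nonneg _) _))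
      (Real.exp_nonneg _)
  refine ⟨Summable.of_nonneg_of_le (fun ℓ => Real.iSup_nonneg (hnn ℓ))
      (fun ℓ => ciSup_le (hS ℓ)) hgeo, ?_⟩
  have htail : ∀ (N : ℕ) (z : ℂ),
      ‖f z - ∑ ℓ ∈ Finset.range N, a ℓ * z ^ ℓ‖
        * Real.exp (-(σ + ε) * ‖z‖ ^ ρ (‖z‖))
      ≤ (C * (1 - lam⁻¹)⁻¹) * (lam⁻¹)^N := by
    intro N z
    set t := ‖z‖ with htdef
    set E := Real.exp (-(σ + ε) * t ^ ρ t) with hEdef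
    have hE0 : 0 < E := Real.exp_pos _
    have hnorm : ∀ ℓ : ℕ, ‖a ℓ * z ^ ℓ‖ = ‖a ℓ‖ * t ^ ℓ := by
      intro ℓ
      rw [norm_mul, norm_pow]
    have hbnd : ∀ ℓ : ℕ, ‖a ℓ * z ^ ℓ‖ * E ≤ C * (lam⁻¹)^ℓ := by
      intro ℓ
      rw [hnorm ℓ]
      exact hS ℓ z
    have hsml : Summable (fun ℓ : ℕ => ‖a ℓ * z ^ ℓ‖) := by
      refine Summable.of_nonneg_of_le (fun ℓ => norm_nonneg _) (fun ℓ => ?_)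
        ((summable_geometric_of_lt_one hr0 hr1).mul_left (C * E⁻¹))
      have h7 := hbnd ℓ
      rw [← mul_le_mul_iff_of_pos_right hE0]
      calc ‖a ℓ * z ^ ℓ‖ * E ≤ C * (lam⁻¹)^ℓ := h7
        _ = C * E⁻¹ * (lam⁻¹)^ℓ * E := by field_simp
    have hsml' : Summable (fun i : ℕ => ‖a (i+N) * z ^ (i+N)‖) :=
      (summable_nat_add_iff (f := fun ℓ : ℕ => ‖a ℓ * z ^ ℓ‖) N).2 hsml
    have htsum : f z - ∑ ℓ ∈ Finset.range N, a ℓ * z ^ ℓ = ∑' i : ℕ, a (i+N) * z ^ (i+N) := by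
      have h0 := (hsum z).tsum_eq
      have h1 := Summable.sum_add_tsum_nat_add (f := fun ℓ : ℕ => a ℓ * z ^ ℓ) N (hsum z).summable
      rw [← h0, ← h1]
      ring
    have hsmr : Summable (fun i : ℕ => C * (lam⁻¹)^(i+N)) := by
      have : (fun i : ℕ => C * (lam⁻¹)^(i+N)) = fun i : ℕ => (C * (lam⁻¹)^N) * (lam⁻¹)^i := by
        funext i; rw [pow_add]; ring
      rw [this]
      exact (summable_geometric_of_lt_one hr0 hr1).mul_left _
    have htsumval : ∑' i : ℕ, C * (lam⁻¹)^(i+N) = (C * (1 - lam⁻¹)⁻¹) * (lam⁻¹)^N := by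
      have h8 : (fun i : ℕ => C * (lam⁻¹)^(i+N)) = fun i : ℕ => (C * (lam⁻¹)^N) * (lam⁻¹)^i := by
        funext i; rw [pow_add]; ring
      rw [h8, tsum_mul_left, tsum_geometric_of_lt_one hr0 hr1]
      ring
    calc ‖f z - ∑ ℓ ∈ Finset.range N, a ℓ * z ^ ℓ‖ * E
        = ‖∑' i : ℕ, a (i+N) * z ^ (i+N)‖ * E := by rw [htsum]
      _ ≤ (∑' i : ℕ, ‖a (i+N) * z ^ (i+N)‖) * E := by
          exact mul_le_mul_of_nonneg_right (norm_tsum_le_tsum_norm hsml') hE0.le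
      _ = ∑' i : ℕ, ‖a (i+N) * z ^ (i+N)‖ * E := by rw [tsum_mul_right]
      _ ≤ ∑' i : ℕ, C * (lam⁻¹)^(i+N) :=
          Summable.tsum_le_tsum (fun i => hbnd (i+N)) (hsml'.mul_right E) hsmr
      _ = (C * (1 - lam⁻¹)⁻¹) * (lam⁻¹)^N := htsumval
  have hlim2 : Tendsto (fun N : ℕ => (C * (1 - lam⁻¹)⁻¹) * (lam⁻¹)^N) atTop (nhds 0) := by
    have h9 := tendsto_pow_atTop_nhds_zero_of_lt_one hr0 hr1
    simpa using h9.const_mul (C * (1 - lam⁻¹)⁻¹)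
  refine tendsto_of_tendsto_of_tendsto_of_le_of_le tendsto_const_nhds hlim2
    (fun N => Real.iSup_nonneg fun z =>
      mul_nonneg (norm_nonneg _) (Real.exp_nonneg _))
    (fun N => ciSup_le fun z => htail N z)
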